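/- Let Ω = [0,1] and let ρ be a nonnegative self-adjoint trace-class operator on L²(Ω) with eigendecomposition ρ = Σ_p ρ_p (φ_p, ·)φ_p, φ_p orthonormal. If φ is a nonnegative bounded function on Ω, then Tr(ρ Φ) = Σ_p ρ_p ∫_Ω φ |φ_p|² dx ≤ C (Tr((H_0+I)^{1/2} ρ (H_0+I)^{1/2})) ‖φ‖_{L¹(Ω)}, where Φ is multiplication by φ, provided each φ_p lies in the form domain of H_0. Consequently the density n[ρ] satisfies ‖n[ρ]‖_{L^∞} ≤ C Tr((H_0+I)^{1/2} ρ (H_0+I)^{1/2}). -/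

import Mathlib

open MeasureTheory intervalIntegral

/-- For a nonnegative trace-class operator ρ = Σ ρ_p (φ_p,·)φ_p on L²([0,1])
    (periodic setting, eigenfunctions represented by C¹ periodic functions),
    and a nonnegative bounded φ:
    Tr(ρΦ) = Σ_p ρ_p ∫ φ|φ_p|² ≤ C Tr((H₀+I)^{1/2} ρ (H₀+I)^{1/2}) ‖φ‖_{L¹},
    where Tr((H₀+I)^{1/2} ρ (H₀+I)^{1/2}) = Σ_p ρ_p (∫|φ_p'|² + ∫|φ_p|²);
    consequently the density n[ρ](x) = Σ_p ρ_p |φ_p(x)|² satisfies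
    ‖n[ρ]‖_{L^∞} ≤ C Tr((H₀+I)^{1/2} ρ (H₀+I)^{1/2}). -/

lemma norm_sq_eq (z : ℂ) : ‖z‖ ^ 2 = z.re ^ 2 + z.im ^ 2 := by
  rw [Complex.sq_norm, Complex.normSq_apply]; ring

lemma key_bound (u du : ℝ → ℂ) (hu : ∀ x, HasDerivAt u (du x) x)
    (hper : Function.Periodic u 1) (hdu : Continuous du) (x : ℝ) :
    ‖u x‖ ^ 2 ≤ 2 * ((∫ t in (0:ℝ)..1, ‖du t‖ ^ 2) + ∫ t in (0:ℝ)..1, ‖u t‖ ^ 2) := by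
  have hucont : Continuous u := continuous_iff_continuousAt.2 fun t => (hu t).continuousAt
  set g : ℝ → ℝ := fun t => ‖u t‖ ^ 2 with hg_def
  set g' : ℝ → ℝ := fun t => 2 * (u t).re * (du t).re + 2 * (u t).im * (du t).im with hg'_def
  have hg : ∀ t, HasDerivAt g (g' t) t := by
    intro t
    have hre : HasDerivAt (fun s => (u s).re) ((du t).re) t :=
      Complex.reCLM.hasFDerivAt.comp_hasDerivAt t (hu t)
    have him : HasDerivAt (fun s => (u s).im) ((du t).im) t :=
      Complex.imCLM.hasFDerivAt.comp_hasDerivAt t (hu t)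
    have h := (hre.pow 2).add (him.pow 2)
    have : g = fun s => (u s).re ^ 2 + (u s).im ^ 2 := funext fun s => norm_sq_eq (u s)
    rw [this]
    simp at h; exact h
  have hgcont : Continuous g := (hucont.norm).pow 2
  have hg'cont : Continuous g' := by
    apply Continuous.add
    · exact (continuous_const.mul (Complex.continuous_re.comp hucont)).mul
        (Complex.continuous_re.comp hdu)
    · exact (continuous_const.mul (Complex.continuous_im.comp hucont)).mul
        (Complex.continuous_im.comp hdu)
  have habs : ∀ t, |g' t| ≤ ‖u t‖ ^ 2 + ‖du t‖ ^ 2 := by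
    intro t
    simp only [hg'_def]
    rw [norm_sq_eq (u t), norm_sq_eq (du t), abs_le]
    constructor <;>
      nlinarith [sq_nonneg ((u t).re - (du t).re), sq_nonneg ((u t).im - (du t).im),
        sq_nonneg ((u t).re + (du t).re), sq_nonneg ((u t).im + (du t).im)]
  set h : ℝ → ℝ := fun t => ‖u t‖ ^ 2 + ‖du t‖ ^ 2 with hh_def
  have hhcont : Continuous h := hgcont.add ((hdu.norm).pow 2)
  set A : ℝ := ∫ t in (0:ℝ)..1, h t with hA_def
  -- |∫ y..z g'| ≤ A for y z ∈ [0,1]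
  have hsub : ∀ y z : ℝ, y ∈ Set.Icc (0:ℝ) 1 → z ∈ Set.Icc (0:ℝ) 1 →
      |∫ t in y..z, g' t| ≤ A := by
    have main : ∀ y z : ℝ, y ∈ Set.Icc (0:ℝ) 1 → z ∈ Set.Icc (0:ℝ) 1 → y ≤ z →
        |∫ t in y..z, g' t| ≤ A := by
      intro y z hy hz hyz
      calc |∫ t in y..z, g' t| ≤ ∫ t in y..z, |g' t| :=
            abs_integral_le_integral_abs hyz
        _ ≤ ∫ t in y..z, h t := by
            apply integral_mono_on hyz (hg'cont.abs.intervalIntegrable _ _)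
              (hhcont.intervalIntegrable _ _)
            intro t _; exact habs t
        _ ≤ A := by
            apply integral_mono_interval hy.1 hyz hz.2
            · filter_upwards with t
              exact add_nonneg (sq_nonneg _) (sq_nonneg _)
            · exact hhcont.intervalIntegrable _ _
    intro y z hy hz
    rcases le_total y z with hyz | hzy
    · exact main y z hy hz hyz
    · rw [intervalIntegral.integral_symm, abs_neg]
      exact main z y hz hy hzy
  -- g z ≤ g y + A for y z ∈ [0,1]
  have hstep : ∀ y z : ℝ, y ∈ Set.Icc (0:ℝ) 1 → z ∈ Set.Icc (0:ℝ) 1 → g z ≤ g y + A := by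
    intro y z hy hz
    have hftc : (∫ t in y..z, g' t) = g z - g y :=
      integral_eq_sub_of_hasDerivAt (fun t _ => hg t) (hg'cont.intervalIntegrable _ _)
    have := (abs_le.1 (hsub y z hy hz)).2
    rw [hftc] at this
    linarith
  -- mean-value: g z ≤ ∫ g + A for z ∈ [0,1]
  have hmean : ∀ z : ℝ, z ∈ Set.Icc (0:ℝ) 1 → g z ≤ (∫ t in (0:ℝ)..1, g t) + A := by
    intro z hz
    have h1 : (∫ _y in (0:ℝ)..1, g z) ≤ ∫ y in (0:ℝ)..1, (g y + A) := by
      apply integral_mono_on zero_le_one (intervalIntegrable_const)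
        ((hgcont.add continuous_const).intervalIntegrable _ _)
      intro y hy; exact hstep y z hy hz
    have h2 : (∫ _y in (0:ℝ)..1, g z) = g z := by simp
    have h3 : (∫ y in (0:ℝ)..1, (g y + A)) = (∫ t in (0:ℝ)..1, g t) + A := by
      rw [integral_add (hgcont.intervalIntegrable _ _) intervalIntegrable_const]
      simp
    rw [h2, h3] at h1; exact h1
  -- reduce x to [0,1] by periodicity
  have hgper : Function.Periodic g 1 := fun t => by simp only [hg_def, hper t]
  have hfract : g x = g (Int.fract x) := by
    have := hgper.sub_int_mul_eq (x := x) ⌊x⌋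
    rw [mul_one] at this
    rw [Int.fract, this]
  have hx0 : Int.fract x ∈ Set.Icc (0:ℝ) 1 :=
    ⟨Int.fract_nonneg x, (Int.fract_lt_one x).le⟩
  have hAval : A = (∫ t in (0:ℝ)..1, ‖u t‖ ^ 2) + ∫ t in (0:ℝ)..1, ‖du t‖ ^ 2 := by
    rw [hA_def, hh_def]
    exact integral_add (f := fun t => ‖u t‖ ^ 2) (g := fun t => ‖du t‖ ^ 2)
      (hgcont.intervalIntegrable _ _) (((hdu.norm).pow 2).intervalIntegrable _ _)
  have hdu_nonneg : 0 ≤ ∫ t in (0:ℝ)..1, ‖du t‖ ^ 2 :=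
    integral_nonneg zero_le_one fun t _ => sq_nonneg _
  have := hmean (Int.fract x) hx0
  rw [← hfract] at this
  rw [hAval] at this
  show g x ≤ _
  linarith

theorem stmt7 :
    ∃ C : ℝ, 0 < C ∧
    ∀ (ρ : ℕ → ℝ) (φp dφp : ℕ → ℝ → ℂ) (φ : ℝ → ℝ),
      (∀ p, 0 ≤ ρ p) → Summable ρ →
      (∀ p x, HasDerivAt (φp p) (dφp p x) x) →
      (∀ p, Function.Periodic (φp p) 1) →
      (∀ p, Continuous (dφp p)) →
      (∀ p q : ℕ, (∫ x in (0:ℝ)..1, (starRingEnd ℂ) (φp p x) * φp q x) =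
        if p = q then 1 else 0) →
      Continuous φ → (∀ x, 0 ≤ φ x) →
      Summable (fun p => ρ p *
        ((∫ x in (0:ℝ)..1, ‖dφp p x‖ ^ 2) + ∫ x in (0:ℝ)..1, ‖φp p x‖ ^ 2)) →
      ((∑' p, ρ p * ∫ x in (0:ℝ)..1, φ x * ‖φp p x‖ ^ 2) ≤
        C * (∑' p, ρ p *
          ((∫ x in (0:ℝ)..1, ‖dφp p x‖ ^ 2) + ∫ x in (0:ℝ)..1, ‖φp p x‖ ^ 2)) *
          ∫ x in (0:ℝ)..1, φ x) ∧
      ∀ x : ℝ, (∑' p, ρ p * ‖φp p x‖ ^ 2) ≤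
        C * (∑' p, ρ p *
          ((∫ x in (0:ℝ)..1, ‖dφp p x‖ ^ 2) + ∫ x in (0:ℝ)..1, ‖φp p x‖ ^ 2)) := by
  refine ⟨2, two_pos, ?_⟩
  intro ρ φp dφp φ hρ hρsum hderiv hper hdcont _horth hφc hφ0 hsum
  set E : ℕ → ℝ := fun p =>
    (∫ x in (0:ℝ)..1, ‖dφp p x‖ ^ 2) + ∫ x in (0:ℝ)..1, ‖φp p x‖ ^ 2 with hE_def
  have hφpc : ∀ p, Continuous (φp p) := fun p =>
    continuous_iff_continuousAt.2 fun t => (hderiv p t).continuousAt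
  have hkey : ∀ p x, ‖φp p x‖ ^ 2 ≤ 2 * E p := fun p x =>
    key_bound (φp p) (dφp p) (hderiv p) (hper p) (hdcont p) x
  have hb : Summable (fun p => ρ p * E p) := hsum
  have hbnn : ∀ p, 0 ≤ ρ p * E p := by
    intro p
    apply mul_nonneg (hρ p)
    exact add_nonneg (integral_nonneg zero_le_one fun t _ => sq_nonneg _)
      (integral_nonneg zero_le_one fun t _ => sq_nonneg _)
  have hIφ : 0 ≤ ∫ x in (0:ℝ)..1, φ x :=
    integral_nonneg zero_le_one fun t _ => hφ0 t
  constructor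
  · -- first inequality
    have hint : ∀ p, (∫ x in (0:ℝ)..1, φ x * ‖φp p x‖ ^ 2) ≤
        (2 * E p) * ∫ x in (0:ℝ)..1, φ x := by
      intro p
      have h1 : (∫ x in (0:ℝ)..1, φ x * ‖φp p x‖ ^ 2) ≤
          ∫ x in (0:ℝ)..1, φ x * (2 * E p) := by
        apply integral_mono_on zero_le_one
          ((hφc.mul (((hφpc p).norm).pow 2)).intervalIntegrable _ _)
          ((hφc.mul continuous_const).intervalIntegrable _ _)
        intro x _
        exact mul_le_mul_of_nonneg_left (hkey p x) (hφ0 x)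
      have h2 : (∫ x in (0:ℝ)..1, φ x * (2 * E p)) =
          (2 * E p) * ∫ x in (0:ℝ)..1, φ x := by
        rw [intervalIntegral.integral_mul_const]; ring
      linarith [h1, h2.le]
    have hcnn : ∀ p, 0 ≤ ρ p * ∫ x in (0:ℝ)..1, φ x * ‖φp p x‖ ^ 2 := by
      intro p
      exact mul_nonneg (hρ p) (integral_nonneg zero_le_one fun t _ =>
        mul_nonneg (hφ0 t) (sq_nonneg _))
    have hcle : ∀ p, ρ p * (∫ x in (0:ℝ)..1, φ x * ‖φp p x‖ ^ 2) ≤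
        (2 * ∫ x in (0:ℝ)..1, φ x) * (ρ p * E p) := by
      intro p
      have := mul_le_mul_of_nonneg_left (hint p) (hρ p)
      nlinarith [this]
    have hsummul : Summable (fun p => (2 * ∫ x in (0:ℝ)..1, φ x) * (ρ p * E p)) :=
      hb.mul_left _
    have ha : Summable (fun p => ρ p * ∫ x in (0:ℝ)..1, φ x * ‖φp p x‖ ^ 2) :=
      Summable.of_nonneg_of_le hcnn hcle hsummul
    calc (∑' p, ρ p * ∫ x in (0:ℝ)..1, φ x * ‖φp p x‖ ^ 2)
        ≤ ∑' p, (2 * ∫ x in (0:ℝ)..1, φ x) * (ρ p * E p) :=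
          Summable.tsum_le_tsum hcle ha hsummul
      _ = (2 * ∫ x in (0:ℝ)..1, φ x) * ∑' p, ρ p * E p := tsum_mul_left
      _ = 2 * (∑' p, ρ p * E p) * ∫ x in (0:ℝ)..1, φ x := by ring
  · -- pointwise density bound
    intro x
    have hdle : ∀ p, ρ p * ‖φp p x‖ ^ 2 ≤ 2 * (ρ p * E p) := by
      intro p
      have := mul_le_mul_of_nonneg_left (hkey p x) (hρ p)
      nlinarith [this]
    have hdnn : ∀ p, 0 ≤ ρ p * ‖φp p x‖ ^ 2 := fun p =>
      mul_nonneg (hρ p) (sq_nonneg _)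
    have hsum2 : Summable (fun p => 2 * (ρ p * E p)) := hb.mul_left 2
    have hd : Summable (fun p => ρ p * ‖φp p x‖ ^ 2) :=
      Summable.of_nonneg_of_le hdnn hdle hsum2
    calc (∑' p, ρ p * ‖φp p x‖ ^ 2) ≤ ∑' p, 2 * (ρ p * E p) :=
          Summable.tsum_le_tsum hdle hd hsum2
      _ = 2 * ∑' p, ρ p * E p := tsum_mul_left
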